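/- Let t be a positive integer, let 1 ≤ p ≤ 2t, let k ≥ l > 1, and let v ≠ u be vertices with l ≤ l_p if v ∈ B and l ≤ l_c if v ∉ B. Suppose that for every vertex w there is a subfamily F̂_{k−1,l−1,p−1}^{vw} ⊆ F_{k−1,l−1,p−1}^{vw} that is (2t−(p−1))-representative for F_{k−1,l−1,p−1}^{vw}. Then the family N = ⋃_{w ∈ V, w ≠ v, (w,u) ∈ A} F̂_{k−1,l−1,p−1}^{vw} ⊎ {u} is a subfamily of F_{k,l,p}^{vu} that is (2t−p)-representative for F_{k,l,p}^{vu}. -/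

import Mathlib

/-- An element of a path-cycle packing: a list of vertices together with a flag
telling whether it is a cycle (`true`) or a path (`false`). -/
structure PCElem (V : Type*) where
  verts : List V
  isCycle : Bool

/-- A valid element w.r.t. the arc relation `A`: the vertices are distinct,
consecutive vertices are joined by arcs, there are at least two vertices
(so paths have length ≥ 1 and cycles have length ≥ 2), and for a cycle the
last vertex is joined back to the first. -/
def ValidElem {V : Type*} (A : V → V → Prop) (e : PCElem V) : Prop :=
  e.verts.Nodup ∧ e.verts.Chain' A ∧ 2 ≤ e.verts.length ∧
    (e.isCycle = true → ∀ h : e.verts ≠ [], A (e.verts.getLast h) (e.verts.head h))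

/-- The length (number of arcs) of an element: a cycle on `k` vertices has length `k`,
a path on `k` vertices has length `k - 1`. -/
def elemLen {V : Type*} (e : PCElem V) : ℕ :=
  if e.isCycle then e.verts.length else e.verts.length - 1

/-- The vertex set of an element. -/
def elemVerts {V : Type*} [DecidableEq V] (e : PCElem V) : Finset V :=
  e.verts.toFinset

/-- A path-cycle packing: a finite set of valid, pairwise vertex-disjoint
paths and cycles. -/
def IsPacking {V : Type*} [DecidableEq V] (A : V → V → Prop)
    (D : Finset (PCElem V)) : Prop :=
  (∀ e ∈ D, ValidElem A e) ∧
    (D : Set (PCElem V)).Pairwise fun e f => Disjoint (elemVerts e) (elemVerts f)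

/-- `c(D)`: the total length of a packing. -/
def packLen {V : Type*} (D : Finset (PCElem V)) : ℕ :=
  ∑ e ∈ D, elemLen e

/-- `V(D)`: the set of vertices appearing in a packing. -/
def packVerts {V : Type*} [DecidableEq V] (D : Finset (PCElem V)) : Finset V :=
  D.biUnion elemVerts

/-- A feasible path: starts at an altruistic vertex of `B` and has length at most `lp`. -/
def FeasPath {V : Type*} (B : Set V) (lp : ℕ) (e : PCElem V) : Prop :=
  e.isCycle = false ∧ (∃ b ∈ B, e.verts.head? = some b) ∧ e.verts.length - 1 ≤ lp

/-- A feasible cycle: contains no vertex of `B` and has length at most `lc`. -/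
def FeasCycle {V : Type*} (B : Set V) (lc : ℕ) (e : PCElem V) : Prop :=
  e.isCycle = true ∧ (∀ w ∈ e.verts, w ∉ B) ∧ e.verts.length ≤ lc

/-- A feasible element: a feasible path or a feasible cycle. -/
def FeasElem {V : Type*} (B : Set V) (lp lc : ℕ) (e : PCElem V) : Prop :=
  FeasPath B lp e ∨ FeasCycle B lc e

/-- A feasible path-cycle packing. -/
def FeasPacking {V : Type*} [DecidableEq V] (A : V → V → Prop) (B : Set V)
    (lp lc : ℕ) (D : Finset (PCElem V)) : Prop :=
  IsPacking A D ∧ ∀ e ∈ D, FeasElem B lp lc e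

/-- A semi-feasible element: a feasible path, a feasible cycle, or a path of
length at most `lc` containing no vertex of `B`. -/
def SemiElem {V : Type*} (B : Set V) (lp lc : ℕ) (e : PCElem V) : Prop :=
  FeasElem B lp lc e ∨
    (e.isCycle = false ∧ (∀ w ∈ e.verts, w ∉ B) ∧ e.verts.length - 1 ≤ lc)

/-- `e` is a `D_l^{vu}`: a path of length `l` from `v` to `u` when `v ≠ u`, and a
cycle of length `l` through `v` when `v = u`. -/
def IsDlvu {V : Type*} [DecidableEq V] (v u : V) (l : ℕ) (e : PCElem V) : Prop :=
  if v = u then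
    e.isCycle = true ∧ v ∈ e.verts ∧ e.verts.length = l
  else
    e.isCycle = false ∧ e.verts.head? = some v ∧ e.verts.getLast? = some u ∧
      e.verts.length = l + 1

/-- `F_{k,l}^{vu}`: the collection of vertex sets `V(D)` over all semi-feasible
packings `D = P ∪ C ∪ {D_l^{vu}}` with `c(D) = k`; the distinguished element
`D_l^{vu}` is semi-feasible and every other element is feasible. -/
def FF {V : Type*} [DecidableEq V] (A : V → V → Prop) (B : Set V) (lp lc : ℕ)
    (k l : ℕ) (v u : V) : Set (Finset V) :=
  { S | ∃ (D : Finset (PCElem V)) (e : PCElem V),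
      IsPacking A D ∧ e ∈ D ∧ IsDlvu v u l e ∧ SemiElem B lp lc e ∧
      (∀ f ∈ D, f ≠ e → FeasElem B lp lc f) ∧ packLen D = k ∧ packVerts D = S }

/-- `F ⊎ T = { X ∪ T : X ∈ F, X ∩ T = ∅ }` for a collection of finite sets. -/
def uplusS {V : Type*} [DecidableEq V] (F : Set (Finset V)) (T : Finset V) :
    Set (Finset V) :=
  { Z | ∃ X ∈ F, Disjoint X T ∧ Z = X ∪ T }

/-- `F_{k,l,p}^{vu}`: the members of `F_{k,l}^{vu}` of cardinality `p`. -/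
def FFp {V : Type*} [DecidableEq V] (A : V → V → Prop) (B : Set V) (lp lc : ℕ)
    (k l p : ℕ) (v u : V) : Set (Finset V) :=
  { S | S ∈ FF A B lp lc k l v u ∧ S.card = p }

/-- `Shat` is a `q`-representative subfamily of the family `S` of finite sets:
`Shat ⊆ S` and for every set `Y` of size at most `q`, if some `X ∈ S` is disjoint
from `Y`, then some `X̂ ∈ Shat` is disjoint from `Y`. -/
def IsRepS {V : Type*} [DecidableEq V] (q : ℕ) (Shat S : Set (Finset V)) : Prop :=
  Shat ⊆ S ∧ ∀ Y : Finset V, Y.card ≤ q →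
    (∃ X ∈ S, Disjoint X Y) → ∃ Xhat ∈ Shat, Disjoint Xhat Y

instance {V : Type*} [DecidableEq V] : DecidableEq (PCElem V) :=
  fun a b => decidable_of_iff (a.verts = b.verts ∧ a.isCycle = b.isCycle)
    (by cases a; cases b; simp)


lemma head_ne_getLast {V : Type*} {l : List V} (hn : l.Nodup) (hl : 2 ≤ l.length)
    (h : l ≠ []) : l.head h ≠ l.getLast h := by
  match l, hl with
  | a :: b :: t, _ =>
    have ht : b :: t ≠ [] := by simp
    rw [List.getLast_cons ht]
    intro hh
    simp only [List.head_cons] at hh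
    have : (b :: t).getLast ht ∈ b :: t := List.getLast_mem ht
    rw [← hh] at this
    exact (List.nodup_cons.mp hn).1 this

lemma packing_erase {V : Type*} [DecidableEq V] {A : V → V → Prop}
    {D : Finset (PCElem V)} {e : PCElem V} (hP : IsPacking A D) (he : e ∈ D) :
    packVerts D = elemVerts e ∪ packVerts (D.erase e) ∧
      Disjoint (elemVerts e) (packVerts (D.erase e)) ∧
      packLen D = elemLen e + packLen (D.erase e) := by
  have hdisj : Disjoint (elemVerts e) (packVerts (D.erase e)) := by
    rw [packVerts, Finset.disjoint_biUnion_right]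
    intro f hf
    exact hP.2 he (Finset.mem_of_mem_erase hf) (Finset.ne_of_mem_erase hf).symm
  refine ⟨?_, hdisj, ?_⟩
  · conv_lhs => rw [packVerts, ← Finset.insert_erase he]
    rw [Finset.biUnion_insert]; rfl
  · rw [packLen, packLen, ← Finset.sum_erase_add D _ he, add_comm]

lemma packing_swap {V : Type*} [DecidableEq V] {A : V → V → Prop}
    {D : Finset (PCElem V)} {e e' : PCElem V}
    (hP : IsPacking A D) (he : e ∈ D) (hv : ValidElem A e')
    (hd : Disjoint (elemVerts e') (packVerts (D.erase e)))
    (hne : (elemVerts e').Nonempty) :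
    IsPacking A (insert e' (D.erase e)) ∧
      packVerts (insert e' (D.erase e)) = elemVerts e' ∪ packVerts (D.erase e) ∧
      packLen (insert e' (D.erase e)) = elemLen e' + packLen (D.erase e) := by
  have hnm : e' ∉ D.erase e := by
    intro hmem
    have hsub : elemVerts e' ⊆ packVerts (D.erase e) :=
      Finset.subset_biUnion_of_mem elemVerts hmem
    have := hd.mono_right (le_refl _)
    obtain ⟨x, hx⟩ := hne
    exact (Finset.disjoint_left.mp hd) hx (hsub hx)
  refine ⟨⟨?_, ?_⟩, ?_, ?_⟩
  · intro f hf
    rcases Finset.mem_insert.mp hf with rfl | hf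
    · exact hv
    · exact hP.1 f (Finset.mem_of_mem_erase hf)
  · rw [Finset.coe_insert]
    rw [Set.pairwise_insert]
    refine ⟨hP.2.mono ?_, ?_⟩
    · intro x hx; exact Finset.mem_of_mem_erase hx
    · intro f hf _
      have hsub : elemVerts f ⊆ packVerts (D.erase e) :=
        Finset.subset_biUnion_of_mem elemVerts hf
      have h1 : Disjoint (elemVerts e') (elemVerts f) := hd.mono_right hsub
      exact ⟨h1, h1.symm⟩
  · rw [packVerts, Finset.biUnion_insert]; rfl
  · rw [packLen, Finset.sum_insert hnm]; rfl
lemma mem_extend {V : Type*} [DecidableEq V] {A : V → V → Prop} {B : Set V}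
    {lp lc k l p : ℕ} {v u w : V} (hvu : v ≠ u) (hvw : w ≠ v) (hwu : A w u)
    (hB : ∀ v u, A v u → u ∉ B) (hl : 1 < l) (hkl : l ≤ k) (hp1 : 1 ≤ p)
    (h1 : v ∈ B → l ≤ lp) (h2 : v ∉ B → l ≤ lc) {X : Finset V}
    (hX : X ∈ FFp A B lp lc (k-1) (l-1) (p-1) v w) (hu : u ∉ X) :
    X ∪ {u} ∈ FFp A B lp lc k l p v u := by
  obtain ⟨⟨D, e, hP, heD, hdl, hsemi, hfeas, hlen, hvert⟩, hcard⟩ := hX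
  rw [IsDlvu, if_neg (Ne.symm hvw)] at hdl
  obtain ⟨hcyc, hhead, hlast, hlenv⟩ := hdl
  have hlv : e.verts.length = l := by omega
  set L := e.verts with hL
  have hLne : L ≠ [] := by intro h; rw [h] at hlv; simp at hlv; omega
  have hval := hP.1 e heD
  have hwL : L.getLast hLne = w := by
    rw [List.getLast?_eq_getLast hLne] at hlast
    exact Option.some.inj hlast
  -- u not in L
  have huL : u ∉ L := by
    intro h
    apply hu
    rw [← hvert]
    exact Finset.mem_biUnion.mpr ⟨e, heD, List.mem_toFinset.mpr h⟩
  set e' : PCElem V := ⟨L ++ [u], false⟩ with he'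
  have hval' : ValidElem A e' := by
    refine ⟨?_, ?_, ?_, ?_⟩
    · rw [List.nodup_append]
      exact ⟨hval.1, List.nodup_singleton u, by
        intro a ha b hb hab; simp at hb; subst hb; subst hab; exact huL ha⟩
    · unfold List.Chain'; rw [List.isChain_append]
      refine ⟨hval.2.1, List.isChain_singleton u, ?_⟩
      intro x hx y hy
      rw [List.getLast?_eq_getLast hLne] at hx
      simp at hx hy
      rw [← hx, ← hy, hwL]; exact hwu
    · simp [he']; omega
    · intro h; simp [he'] at h
  obtain ⟨hdec1, hdec2, hdec3⟩ := packing_erase hP heD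
  have helen : elemLen e = l - 1 := by rw [elemLen, hcyc]; simp [hlv]; rw [← hL, hlv]
  have hRsub : packVerts (D.erase e) ⊆ X := by
    rw [← hvert, hdec1]; exact Finset.subset_union_right
  have hev' : elemVerts e' = L.toFinset ∪ {u} := by
    rw [elemVerts, he']; simp [List.toFinset_append]
  have hdisj' : Disjoint (elemVerts e') (packVerts (D.erase e)) := by
    rw [hev', Finset.disjoint_union_left]
    refine ⟨hdec2, ?_⟩
    rw [Finset.disjoint_singleton_left]
    intro h; exact hu (hRsub h)
  have hne' : (elemVerts e').Nonempty := ⟨u, by rw [hev']; simp⟩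
  obtain ⟨hP', hV', hL'⟩ := packing_swap hP heD hval' hdisj' hne'
  refine ⟨⟨insert e' (D.erase e), e', hP', Finset.mem_insert_self _ _, ?_, ?_, ?_, ?_, ?_⟩, ?_⟩
  · rw [IsDlvu, if_neg hvu]
    refine ⟨rfl, ?_, ?_, ?_⟩
    · show (L ++ [u]).head? = some v
      rw [List.head?_append, hhead]; rfl
    · exact List.getLast?_concat
    · simp [he']; omega
  · -- semi-feasible
    by_cases hvB : v ∈ B
    · left; left
      refine ⟨rfl, ⟨v, hvB, ?_⟩, ?_⟩
      · show (L ++ [u]).head? = some v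
        rw [List.head?_append, hhead]; rfl
      · have := h1 hvB
        show (L ++ [u]).length - 1 ≤ lp
        rw [List.length_append, hlv]; simpa using this
    · have hnoB : ∀ x ∈ L, x ∉ B := by
        rcases hsemi with (⟨_, ⟨b, hbB, hb⟩, _⟩ | ⟨hc, _, _⟩) | ⟨_, hnb, _⟩
        · rw [hhead] at hb; exact absurd (Option.some.inj hb ▸ hbB) hvB
        · rw [hcyc] at hc; exact absurd hc (by simp)
        · exact hnb
      right
      refine ⟨rfl, ?_, ?_⟩
      · intro x hx
        rcases List.mem_append.mp hx with h | h
        · exact hnoB x h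
        · simp at h; rw [h]; exact hB w u hwu
      · have := h2 hvB
        show (L ++ [u]).length - 1 ≤ lc
        rw [List.length_append, hlv]; simpa using this
  · intro f hf hne
    rcases Finset.mem_insert.mp hf with rfl | hf
    · exact absurd rfl hne
    · exact hfeas f (Finset.mem_of_mem_erase hf) (Finset.ne_of_mem_erase hf)
  · rw [hL']
    have : elemLen e' = l := by rw [elemLen]; simp [he']; omega
    omega
  · rw [hV', hev', ← hvert, hdec1]
    have : elemVerts e = L.toFinset := rfl
    rw [this]
    ext a; simp
  · rw [Finset.card_union_of_disjoint (by rw [Finset.disjoint_singleton_right]; exact hu),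
      Finset.card_singleton, hcard]
    omega

lemma mem_shrink {V : Type*} [DecidableEq V] {A : V → V → Prop} {B : Set V}
    {lp lc k l p : ℕ} {v u : V} (hvu : v ≠ u) (hl : 1 < l) (hkl : l ≤ k)
    {X : Finset V} (hX : X ∈ FFp A B lp lc k l p v u) :
    ∃ w, w ≠ v ∧ A w u ∧ u ∈ X ∧
      X.erase u ∈ FFp A B lp lc (k-1) (l-1) (p-1) v w := by
  obtain ⟨⟨D, e, hP, heD, hdl, hsemi, hfeas, hlen, hvert⟩, hcard⟩ := hX
  rw [IsDlvu, if_neg hvu] at hdl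
  obtain ⟨hcyc, hhead, hlast, hlenv⟩ := hdl
  have hval := hP.1 e heD
  set L := e.verts with hL
  have hLne : L ≠ [] := by intro h; rw [h] at hlenv; simp at hlenv
  have huL : L.getLast hLne = u := by
    rw [List.getLast?_eq_getLast hLne] at hlast
    exact Option.some.inj hlast
  set M := L.dropLast with hM
  have hMlen : M.length = l := by rw [hM, List.length_dropLast, hlenv]; omega
  have hMne : M ≠ [] := by intro h; rw [h] at hMlen; simp at hMlen; omega
  set w := M.getLast hMne with hw
  have hdecL : M ++ [u] = L := by rw [hM, ← huL]; exact List.dropLast_append_getLast hLne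
  -- nodup of L split
  have hnodL : (M ++ [u]).Nodup := by rw [hdecL]; exact hval.1
  rw [List.nodup_append] at hnodL
  obtain ⟨hMnod, -, hMdisj⟩ := hnodL
  have huM : u ∉ M := fun h => hMdisj u h u (by simp) rfl
  -- chain split
  have hchL : (M ++ [u]).Chain' A := by rw [hdecL]; exact hval.2.1
  unfold List.Chain' at hchL; rw [List.isChain_append] at hchL
  obtain ⟨hMch, -, hlink⟩ := hchL
  have hAwu : A w u := by
    apply hlink w _ u (by simp)
    rw [List.getLast?_eq_getLast hMne]
    simp [Option.mem_def, hw]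
  -- head of M is v
  have hMhead : M.head? = some v := by
    have := hhead
    rw [← hdecL, List.head?_append, List.head?_eq_head hMne] at this
    rw [List.head?_eq_head hMne]
    simpa using this
  have hMheadv : M.head hMne = v := by
    rw [List.head?_eq_head hMne] at hMhead; exact Option.some.inj hMhead
  have hwv : w ≠ v := by
    rw [← hMheadv, hw]
    exact (head_ne_getLast hMnod (by omega) hMne).symm
  have huX : u ∈ X := by
    rw [← hvert]
    exact Finset.mem_biUnion.mpr ⟨e, heD, List.mem_toFinset.mpr (huL ▸ List.getLast_mem hLne)⟩
  set e₀ : PCElem V := ⟨M, false⟩ with he₀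
  have hval₀ : ValidElem A e₀ := by
    refine ⟨hMnod, hMch, by simp [he₀]; omega, ?_⟩
    intro h; simp [he₀] at h
  obtain ⟨hdec1, hdec2, hdec3⟩ := packing_erase hP heD
  have heeq : elemVerts e = M.toFinset ∪ {u} := by
    show L.toFinset = _
    rw [← hdecL, List.toFinset_append]; simp
  have huR : u ∉ packVerts (D.erase e) := fun h =>
    (Finset.disjoint_left.mp hdec2) (by rw [heeq]; simp) h
  have hdisj₀ : Disjoint (elemVerts e₀) (packVerts (D.erase e)) := by
    refine hdec2.mono_left ?_
    rw [heeq]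
    show M.toFinset ⊆ _
    exact Finset.subset_union_left
  have hne₀ : (elemVerts e₀).Nonempty :=
    ⟨v, List.mem_toFinset.mpr (hMheadv ▸ List.head_mem hMne)⟩
  obtain ⟨hP', hV', hL'⟩ := packing_swap hP heD hval₀ hdisj₀ hne₀
  have helen : elemLen e = l := by rw [elemLen, hcyc]; simp [hlenv]; rw [← hL, hlenv]; rfl
  have helen₀ : elemLen e₀ = l - 1 := by rw [elemLen]; simp [he₀, hMlen]
  refine ⟨w, hwv, hAwu, huX,
    ⟨⟨insert e₀ (D.erase e), e₀, hP', Finset.mem_insert_self _ _, ?_, ?_, ?_, ?_, ?_⟩, ?_⟩⟩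
  · rw [IsDlvu, if_neg hwv.symm]
    exact ⟨rfl, hMhead, List.getLast?_eq_getLast hMne, by rw [hMlen]; omega⟩
  · -- semi-feasible
    have hvL : v ∈ L := List.mem_of_mem_head? hhead
    by_cases hvB : v ∈ B
    · have hlp : L.length - 1 ≤ lp := by
        rcases hsemi with (⟨_, _, hle⟩ | ⟨hc, _, _⟩) | ⟨_, hnb, _⟩
        · exact hle
        · rw [hcyc] at hc; exact absurd hc (by simp)
        · exact absurd hvB (hnb v hvL)
      left; left
      refine ⟨rfl, ⟨v, hvB, hMhead⟩, ?_⟩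
      show M.length - 1 ≤ lp
      omega
    · have hlc : ∀ x ∈ L, x ∉ B := by
        rcases hsemi with (⟨_, ⟨b, hbB, hb⟩, _⟩ | ⟨hc, _, _⟩) | ⟨_, hnb, _⟩
        · rw [hhead] at hb; exact absurd (Option.some.inj hb ▸ hbB) hvB
        · rw [hcyc] at hc; exact absurd hc (by simp)
        · exact hnb
      have hlc2 : L.length - 1 ≤ lc := by
        rcases hsemi with (⟨_, ⟨b, hbB, hb⟩, _⟩ | ⟨hc, _, _⟩) | ⟨_, _, hle⟩
        · rw [hhead] at hb; exact absurd (Option.some.inj hb ▸ hbB) hvB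
        · rw [hcyc] at hc; exact absurd hc (by simp)
        · exact hle
      right
      refine ⟨rfl, ?_, ?_⟩
      · intro x hx
        exact hlc x (by rw [← hdecL]; exact List.mem_append_left _ hx)
      · show M.length - 1 ≤ lc
        omega
  · intro f hf hne
    rcases Finset.mem_insert.mp hf with rfl | hf
    · exact absurd rfl hne
    · exact hfeas f (Finset.mem_of_mem_erase hf) (Finset.ne_of_mem_erase hf)
  · rw [hL']; omega
  · rw [hV']
    have : elemVerts e₀ = M.toFinset := rfl
    rw [this, ← hvert, hdec1, heeq]
    have huM' : u ∉ M.toFinset := fun h => huM (List.mem_toFinset.mp h)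
    ext a
    simp only [Finset.mem_erase, Finset.mem_union, Finset.mem_singleton]
    constructor
    · rintro (h | h)
      · exact ⟨fun hh => huM' (hh ▸ h), Or.inl (Or.inl h)⟩
      · exact ⟨fun hh => huR (hh ▸ h), Or.inr h⟩
    · rintro ⟨hne, (h | rfl) | h⟩
      · exact Or.inl h
      · exact absurd rfl hne
      · exact Or.inr h
  · rw [Finset.card_erase_of_mem huX, hcard]
/-- (Correctness of the compression step, Case (iii)) If for every `w` the family
`F̂_{k-1,l-1,p-1}^{vw}` is `(2t-(p-1))`-representative for `F_{k-1,l-1,p-1}^{vw}`,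
then `⋃_{w ≠ v, (w,u) ∈ A} F̂_{k-1,l-1,p-1}^{vw} ⊎ {u}` is a subfamily of
`F_{k,l,p}^{vu}` that is `(2t-p)`-representative for it. -/
theorem rep_recurrence_extend_path {V : Type*} [Fintype V] [DecidableEq V]
    (A : V → V → Prop) (B : Set V) (lp lc : ℕ)
    (hloop : ∀ v, ¬ A v v) (hB : ∀ v u, A v u → u ∉ B)
    (t p k l : ℕ) (v u : V)
    (ht : 0 < t) (hp1 : 1 ≤ p) (hp2 : p ≤ 2 * t)
    (hkl : l ≤ k) (hl : 1 < l) (hvu : v ≠ u)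
    (h1 : v ∈ B → l ≤ lp) (h2 : v ∉ B → l ≤ lc)
    (Fhat : V → Set (Finset V))
    (hrep : ∀ w : V, IsRepS (2 * t - (p - 1)) (Fhat w)
      (FFp A B lp lc (k - 1) (l - 1) (p - 1) v w)) :
    IsRepS (2 * t - p)
      (⋃ (w : V) (_ : w ≠ v) (_ : A w u), uplusS (Fhat w) {u})
      (FFp A B lp lc k l p v u) := by

  constructor
  · -- subset
    intro Z hZ
    simp only [Set.mem_iUnion] at hZ
    obtain ⟨w, hwv, hwu, X, hXF, hXu, rfl⟩ := hZ
    have hX : X ∈ FFp A B lp lc (k-1) (l-1) (p-1) v w := (hrep w).1 hXF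
    have hu : u ∉ X := Finset.disjoint_singleton_right.mp hXu
    exact mem_extend hvu hwv hwu hB hl hkl hp1 h1 h2 hX hu
  · -- representativity
    intro Y hY ⟨X, hX, hXY⟩
    obtain ⟨w, hwv, hwu, huX, hX0⟩ := mem_shrink hvu hl hkl hX
    have hY' : (insert u Y).card ≤ 2 * t - (p - 1) := by
      have := Finset.card_insert_le u Y
      omega
    have hdisj0 : Disjoint (X.erase u) (insert u Y) := by
      rw [Finset.disjoint_insert_right]
      exact ⟨Finset.notMem_erase u X, hXY.mono_left (Finset.erase_subset u X)⟩
    obtain ⟨Xh, hXh, hXhY'⟩ := (hrep w).2 (insert u Y) hY' ⟨X.erase u, hX0, hdisj0⟩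
    refine ⟨Xh ∪ {u}, ?_, ?_⟩
    · simp only [Set.mem_iUnion]
      refine ⟨w, hwv, hwu, Xh, hXh, ?_, rfl⟩
      rw [Finset.disjoint_singleton_right]
      exact fun h => (Finset.disjoint_left.mp hXhY') h (Finset.mem_insert_self u Y)
    · rw [Finset.disjoint_union_left]
      refine ⟨hXhY'.mono_right (Finset.subset_insert u Y), ?_⟩
      rw [Finset.disjoint_singleton_left]
      exact fun h => (Finset.disjoint_left.mp hXY) huX h
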